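/- Let X and Y be bi-atomic random variables with the same two-point support {a, b}, a < b. Then for every admissible function g, Corr(g(X), g(Y)) = Corr(X,Y); consequently (X,Y) ∈ IC (regardless of the dependence structure of (X,Y)). -/

import Mathlib

open MeasureTheory ProbabilityTheory

variable {Ω : Type*} [MeasurableSpace Ω]

noncomputable def cov (μ : Measure Ω) (X Y : Ω → ℝ) : ℝ :=
  ∫ ω, (X ω - ∫ a, X a ∂μ) * (Y ω - ∫ a, Y a ∂μ) ∂μ

noncomputable def corr (μ : Measure Ω) (X Y : Ω → ℝ) : ℝ :=
  cov μ X Y / Real.sqrt (variance X μ * variance Y μ)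

def Admissible (μ : Measure Ω) (X Y : Ω → ℝ) (g : ℝ → ℝ) : Prop :=
  Measurable g ∧ MemLp (g ∘ X) 2 μ ∧ MemLp (g ∘ Y) 2 μ ∧
    0 < variance (g ∘ X) μ ∧ 0 < variance (g ∘ Y) μ

def IC (μ : Measure Ω) (X Y : Ω → ℝ) (r : ℝ) : Prop :=
  corr μ X Y = r ∧ ∀ g : ℝ → ℝ, Admissible μ X Y g → corr μ (g ∘ X) (g ∘ Y) = r

/-- `X` is bi-atomic with support `{a, b}` (`a < b`). -/
def BiAtomic (μ : Measure Ω) (X : Ω → ℝ) (a b : ℝ) : Prop :=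
  a < b ∧ 0 < μ {ω | X ω = a} ∧ 0 < μ {ω | X ω = b} ∧
    μ {ω | X ω = a} + μ {ω | X ω = b} = 1

open scoped ENNReal NNReal

lemma variance_congr_ae' (μ : Measure Ω) {X X' : Ω → ℝ} (h : X =ᵐ[μ] X') :
    variance X μ = variance X' μ := by
  have hm : (∫ x, X x ∂μ) = ∫ x, X' x ∂μ := integral_congr_ae h
  unfold variance evariance
  congr 1
  refine lintegral_congr_ae ?_
  filter_upwards [h] with ω hω
  rw [hω, hm]

lemma variance_affine' (μ : Measure Ω) [IsProbabilityMeasure μ] {X : Ω → ℝ}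
    (hX : Integrable X μ) (s c : ℝ) :
    variance (fun ω => s * X ω + c) μ = s ^ 2 * variance X μ := by
  have hm : (∫ x, (s * X x + c) ∂μ) = s * (∫ x, X x ∂μ) + c := by
    rw [integral_add (hX.const_mul s) (integrable_const c), integral_const_mul,
      integral_const]
    simp
  unfold variance evariance
  have hmean : μ[fun ω => s * X ω + c] = s * (∫ x, X x ∂μ) + c := hm
  rw [hmean]
  have heq : ∀ ω : Ω, (‖s * X ω + c - (s * (∫ x, X x ∂μ) + c)‖ₑ) ^ 2
      = ‖s‖ₑ ^ 2 * ‖X ω - (∫ x, X x ∂μ)‖ₑ ^ 2 := by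
    intro ω
    have h2 : s * X ω + c - (s * (∫ x, X x ∂μ) + c) = s * (X ω - (∫ x, X x ∂μ)) := by ring
    rw [h2, enorm_mul]
    push_cast
    ring
  simp_rw [heq]
  rw [lintegral_const_mul' _ _ (by simp [ENNReal.pow_ne_top]), ENNReal.toReal_mul]
  congr 1
  rw [ENNReal.toReal_pow]
  simp [sq_abs]

lemma cov_sq_le' (μ : Measure Ω) [IsProbabilityMeasure μ] {X Y : Ω → ℝ}
    (hX : MemLp X 2 μ) (hY : MemLp Y 2 μ) :
    (cov μ X Y) ^ 2 ≤ variance X μ * variance Y μ := by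
  set m := ∫ a, X a ∂μ
  set n := ∫ a, Y a ∂μ
  have hF : MemLp (fun ω => X ω - m) 2 μ := hX.sub (memLp_const m)
  have hG : MemLp (fun ω => Y ω - n) 2 μ := hY.sub (memLp_const n)
  set F : Lp ℝ 2 μ := hF.toLp _
  set G : Lp ℝ 2 μ := hG.toLp _
  have key := real_inner_mul_inner_self_le F G
  have hinner : ∀ (f g : Lp ℝ 2 μ), inner ℝ f g = ∫ a, f a * g a ∂μ := by
    intro f g
    rw [MeasureTheory.L2.inner_def]
    simp [RCLike.inner_apply, mul_comm]
  have hFG : inner ℝ F G = cov μ X Y := by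
    rw [hinner]
    refine integral_congr_ae ?_
    filter_upwards [hF.coeFn_toLp, hG.coeFn_toLp] with ω h1 h2
    rw [h1, h2]
  have hFF : inner ℝ F F = variance X μ := by
    rw [hinner, variance_eq_integral hX.aestronglyMeasurable.aemeasurable]
    refine integral_congr_ae ?_
    filter_upwards [hF.coeFn_toLp] with ω h1
    rw [h1]
    simp [pow_two, m]
  have hGG : inner ℝ G G = variance Y μ := by
    rw [hinner, variance_eq_integral hY.aestronglyMeasurable.aemeasurable]
    refine integral_congr_ae ?_
    filter_upwards [hG.coeFn_toLp] with ω h1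
    rw [h1]
    simp [pow_two, n]
  rw [hFG, hFF, hGG] at key
  nlinarith [key]

lemma biatomic_ae' (μ : Measure Ω) [IsProbabilityMeasure μ] {X : Ω → ℝ}
    (hXm : Measurable X) {a b : ℝ} (hab : a ≠ b)
    (hsum : μ {ω | X ω = a} + μ {ω | X ω = b} = 1) :
    ∀ᵐ ω ∂μ, X ω = a ∨ X ω = b := by
  have hA : MeasurableSet {ω | X ω = a} := hXm (measurableSet_singleton a)
  have hB : MeasurableSet {ω | X ω = b} := hXm (measurableSet_singleton b)
  have hdisj : Disjoint {ω | X ω = a} {ω | X ω = b} := by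
    rw [Set.disjoint_left]
    rintro ω h1 h2
    exact hab (h1.symm.trans h2)
  have hU : μ ({ω | X ω = a} ∪ {ω | X ω = b}) = 1 := by
    rw [measure_union hdisj hB, hsum]
  have : μ ({ω | X ω = a} ∪ {ω | X ω = b})ᶜ = 0 := by
    rw [measure_compl (hA.union hB) (measure_ne_top μ _), hU, measure_univ, tsub_self]
  rw [ae_iff]
  have hset : {ω | ¬(X ω = a ∨ X ω = b)} = ({ω | X ω = a} ∪ {ω | X ω = b})ᶜ := by
    ext ω; simp [not_or]
  rw [hset]
  exact this

lemma biatomic_memℒp' (μ : Measure Ω) [IsProbabilityMeasure μ] {X : Ω → ℝ}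
    (hXm : Measurable X) {a b : ℝ}
    (hae : ∀ᵐ ω ∂μ, X ω = a ∨ X ω = b) : MemLp X 2 μ := by
  refine MemLp.of_bound hXm.aestronglyMeasurable (max |a| |b|) ?_
  filter_upwards [hae] with ω hω
  rcases hω with h | h <;> rw [h, Real.norm_eq_abs]
  · exact le_max_left _ _
  · exact le_max_right _ _

lemma biatomic_var_pos' (μ : Measure Ω) [IsProbabilityMeasure μ] {X : Ω → ℝ}
    (hXm : Measurable X) {a b : ℝ} (hab : a ≠ b)
    (ha : 0 < μ {ω | X ω = a}) (hb : 0 < μ {ω | X ω = b})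
    (hX2 : MemLp X 2 μ) : 0 < variance X μ := by
  rw [variance]
  refine ENNReal.toReal_pos ?_ hX2.evariance_lt_top.ne
  intro h0
  have hconst : μ {ω | ¬ X ω = μ[X]} = 0 :=
    ae_iff.mp ((evariance_eq_zero_iff hXm.aemeasurable).mp h0)
  have haa : a = μ[X] := by
    by_contra hne
    have hsub : {ω | X ω = a} ⊆ {ω | ¬ X ω = μ[X]} := by
      intro ω (h : X ω = a)
      simp only [Set.mem_setOf_eq]
      rw [h]; exact fun hc => hne hc
    have := measure_mono_null hsub hconst
    exact absurd this ha.ne'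
  have hbb : b = μ[X] := by
    by_contra hne
    have hsub : {ω | X ω = b} ⊆ {ω | ¬ X ω = μ[X]} := by
      intro ω (h : X ω = b)
      simp only [Set.mem_setOf_eq]
      rw [h]; exact fun hc => hne hc
    have := measure_mono_null hsub hconst
    exact absurd this hb.ne'
  exact hab (haa.trans hbb.symm)

/-- If `X` and `Y` are bi-atomic with the same two-point support `{a,b}`,
then `Corr(g(X), g(Y)) = Corr(X,Y)` for every admissible `g`; consequently `(X,Y) ∈ IC`. -/
theorem biatomic_same_support_ic
    (μ : Measure Ω) [IsProbabilityMeasure μ] (X Y : Ω → ℝ)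
    (hXm : Measurable X) (hYm : Measurable Y)
    (a b : ℝ) (hX : BiAtomic μ X a b) (hY : BiAtomic μ Y a b) :
    (∀ g : ℝ → ℝ, Admissible μ X Y g → corr μ (g ∘ X) (g ∘ Y) = corr μ X Y) ∧
      ∃ r ∈ Set.Icc (-1 : ℝ) 1, IC μ X Y r := by
  obtain ⟨hab, haX, hbX, hsX⟩ := hX
  obtain ⟨-, haY, hbY, hsY⟩ := hY
  have habne : a ≠ b := hab.ne
  have haeX := biatomic_ae' μ hXm habne hsX
  have haeY := biatomic_ae' μ hYm habne hsY
  have hX2 : MemLp X 2 μ := biatomic_memℒp' μ hXm haeX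
  have hY2 : MemLp Y 2 μ := biatomic_memℒp' μ hYm haeY
  have hvX : 0 < variance X μ := biatomic_var_pos' μ hXm habne haX hbX hX2
  have hvY : 0 < variance Y μ := biatomic_var_pos' μ hYm habne haY hbY hY2
  have hXi : Integrable X μ := hX2.integrable one_le_two
  have hYi : Integrable Y μ := hY2.integrable one_le_two
  have hba : b - a ≠ 0 := sub_ne_zero.mpr hab.ne'
  have main : ∀ g : ℝ → ℝ, Admissible μ X Y g →
      corr μ (g ∘ X) (g ∘ Y) = corr μ X Y := by
    intro g hg
    obtain ⟨hgm, hgX2, hgY2, hvgX, hvgY⟩ := hg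
    set s : ℝ := (g b - g a) / (b - a) with hs_def
    set c : ℝ := g a - s * a with hc_def
    have hsba : s * (b - a) = g b - g a := div_mul_cancel₀ _ hba
    have hgX : (g ∘ X) =ᵐ[μ] fun ω => s * X ω + c := by
      filter_upwards [haeX] with ω hω
      rcases hω with h | h <;> simp only [Function.comp_apply, h, hc_def]
      · ring
      · have : s * b + (g a - s * a) = g a + s * (b - a) := by ring
        rw [this, hsba]; ring
    have hgY : (g ∘ Y) =ᵐ[μ] fun ω => s * Y ω + c := by
      filter_upwards [haeY] with ω hω
      rcases hω with h | h <;> simp only [Function.comp_apply, h, hc_def]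
      · ring
      · have : s * b + (g a - s * a) = g a + s * (b - a) := by ring
        rw [this, hsba]; ring
    have hmX : (∫ x, (g ∘ X) x ∂μ) = s * (∫ x, X x ∂μ) + c := by
      rw [integral_congr_ae hgX,
        integral_add (hXi.const_mul s) (integrable_const c), integral_const_mul,
        integral_const]
      simp
    have hmY : (∫ x, (g ∘ Y) x ∂μ) = s * (∫ x, Y x ∂μ) + c := by
      rw [integral_congr_ae hgY,
        integral_add (hYi.const_mul s) (integrable_const c), integral_const_mul,
        integral_const]
      simp
    have hcov : cov μ (g ∘ X) (g ∘ Y) = s ^ 2 * cov μ X Y := by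
      unfold cov
      rw [← integral_const_mul]
      refine integral_congr_ae ?_
      filter_upwards [hgX, hgY] with ω h1 h2
      rw [hmX, hmY, h1, h2]
      ring
    have hvarX : variance (g ∘ X) μ = s ^ 2 * variance X μ :=
      (variance_congr_ae' μ hgX).trans (variance_affine' μ hXi s c)
    have hvarY : variance (g ∘ Y) μ = s ^ 2 * variance Y μ :=
      (variance_congr_ae' μ hgY).trans (variance_affine' μ hYi s c)
    have hs : s ≠ 0 := by
      intro h0
      rw [hvarX, h0] at hvgX
      simp at hvgX
    have hs2 : (0 : ℝ) < s ^ 2 := by positivity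
    unfold corr
    rw [hcov, hvarX, hvarY]
    have hprod : s ^ 2 * variance X μ * (s ^ 2 * variance Y μ)
        = (s ^ 2) ^ 2 * (variance X μ * variance Y μ) := by ring
    rw [hprod, Real.sqrt_mul (by positivity), Real.sqrt_sq (le_of_lt hs2),
      mul_div_mul_left _ _ hs2.ne']
  refine ⟨main, corr μ X Y, ?_, rfl, main⟩
  have key := cov_sq_le' μ hX2 hY2
  set q := Real.sqrt (variance X μ * variance Y μ) with hq_def
  have hq : 0 < q := Real.sqrt_pos.mpr (mul_pos hvX hvY)
  have hq2 : q ^ 2 = variance X μ * variance Y μ :=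
    Real.sq_sqrt (le_of_lt (mul_pos hvX hvY))
  have habs : |cov μ X Y| ≤ q := by
    rw [← Real.sqrt_sq_eq_abs, hq_def]
    exact Real.sqrt_le_sqrt key
  rw [abs_le] at habs
  constructor
  · rw [corr, ← hq_def, le_div_iff₀ hq]
    linarith [habs.1]
  · rw [corr, ← hq_def, div_le_one hq]
    exact habs.2
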